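/- For every prioritization P = ⟨P₁,…,Pₙ⟩ of Σ there exists a weight assignment w : α → ℕ such that for all S, S' ⊆ Σ, S ≤_P S' holds if and only if ∑_{r ∈ S} w r ≤ ∑_{r ∈ S'} w r (prioritized cardinality can be translated into weights). -/

import Mathlib

open Finset

/-- Prioritized cardinality `S ≤_P S'`. -/
def prioCard {α : Type*} [DecidableEq α] {n : ℕ} (P : Fin n → Finset α)
    (S S' : Finset α) : Prop :=
  (∀ i, (S ∩ P i).card = (S' ∩ P i).card) ∨
    ∃ i, (S ∩ P i).card < (S' ∩ P i).card ∧ ∀ j, j < i → (S ∩ P j).card = (S' ∩ P j).card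

private lemma geom_lt' (c : ℕ) (m : ℕ) :
    c * ∑ k ∈ Finset.range m, (c + 1) ^ k < (c + 1) ^ m := by
  induction m with
  | zero => simp
  | succ m ih =>
    rw [Finset.sum_range_succ, Nat.mul_add, pow_succ]
    nlinarith

private lemma tail_lt' (c n : ℕ) (a : Fin n → ℕ) (ha : ∀ j, a j ≤ c) (i : Fin n) :
    ∑ j ∈ Finset.Ioi i, a j * (c + 1) ^ (n - 1 - (j : ℕ)) < (c + 1) ^ (n - 1 - (i : ℕ)) := by
  calc ∑ j ∈ Finset.Ioi i, a j * (c + 1) ^ (n - 1 - (j : ℕ))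
      ≤ ∑ j ∈ Finset.Ioi i, c * (c + 1) ^ (n - 1 - (j : ℕ)) :=
        Finset.sum_le_sum (fun j _ => Nat.mul_le_mul_right _ (ha j))
    _ = c * ∑ j ∈ Finset.Ioi i, (c + 1) ^ (n - 1 - (j : ℕ)) := (Finset.mul_sum _ _ _).symm
    _ = c * ∑ k ∈ (Finset.Ioi i).image (fun j : Fin n => n - 1 - (j : ℕ)), (c + 1) ^ k := by
        rw [Finset.sum_image]
        intro x _ y _ hxy
        have hx := x.isLt; have hy := y.isLt
        exact Fin.ext (by simp only at hxy; omega)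
    _ ≤ c * ∑ k ∈ Finset.range (n - 1 - (i : ℕ)), (c + 1) ^ k := by
        apply Nat.mul_le_mul_left
        apply Finset.sum_le_sum_of_subset
        intro k hk
        simp only [Finset.mem_image, Finset.mem_Ioi] at hk
        obtain ⟨j, hj, rfl⟩ := hk
        have h1 : (i : ℕ) < (j : ℕ) := hj
        have h2 := j.isLt
        simp only [Finset.mem_range]
        omega
    _ < (c + 1) ^ (n - 1 - (i : ℕ)) := geom_lt' c _

private lemma lex_value_lt' (c n : ℕ) (a b : Fin n → ℕ) (ha : ∀ j, a j ≤ c)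
    (i : Fin n) (hi : a i < b i) (hj : ∀ j, j < i → a j = b j) :
    ∑ j, a j * (c + 1) ^ (n - 1 - (j : ℕ)) < ∑ j, b j * (c + 1) ^ (n - 1 - (j : ℕ)) := by
  have hsplit : ∀ f : Fin n → ℕ, ∑ j, f j =
      ∑ j ∈ Finset.Iio i, f j + f i + ∑ j ∈ Finset.Ioi i, f j := by
    intro f
    have h1 : Finset.Iio i ∪ {i} ∪ Finset.Ioi i = Finset.univ := by
      ext x
      simp only [Finset.mem_union, Finset.mem_Iio, Finset.mem_singleton, Finset.mem_Ioi,
        Finset.mem_univ, iff_true]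
      rcases lt_trichotomy x i with h | h | h
      · exact Or.inl (Or.inl h)
      · exact Or.inl (Or.inr h)
      · exact Or.inr h
    have d1 : Disjoint (Finset.Iio i ∪ {i}) (Finset.Ioi i) := by
      simp only [Finset.disjoint_left, Finset.mem_union, Finset.mem_Iio, Finset.mem_singleton,
        Finset.mem_Ioi]
      rintro x (h | rfl) <;> intro h' <;> exact absurd h' (by omega)
    have d2 : Disjoint (Finset.Iio i) ({i} : Finset (Fin n)) := by
      simp only [Finset.disjoint_left, Finset.mem_Iio, Finset.mem_singleton]
      exact fun a h => ne_of_lt h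
    rw [← h1, Finset.sum_union d1, Finset.sum_union d2, Finset.sum_singleton]
  rw [hsplit, hsplit]
  set e := (c + 1) ^ (n - 1 - (i : ℕ)) with he
  have hA : ∑ j ∈ Finset.Iio i, a j * (c + 1) ^ (n - 1 - (j : ℕ)) =
      ∑ j ∈ Finset.Iio i, b j * (c + 1) ^ (n - 1 - (j : ℕ)) :=
    Finset.sum_congr rfl (fun j hjm => by rw [hj j (Finset.mem_Iio.mp hjm)])
  have hT := tail_lt' c n a ha i
  have hkey : a i * e + ∑ j ∈ Finset.Ioi i, a j * (c + 1) ^ (n - 1 - (j : ℕ)) < b i * e := by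
    calc a i * e + ∑ j ∈ Finset.Ioi i, a j * (c + 1) ^ (n - 1 - (j : ℕ))
        < a i * e + e := by omega
      _ = (a i + 1) * e := by ring
      _ ≤ b i * e := Nat.mul_le_mul_right e hi
  omega

theorem prioCard_translatable_into_weights
    {α : Type*} [DecidableEq α] (Rules : Finset α)
    (n : ℕ) (P : Fin n → Finset α)
    (hdisj : ∀ i j, i ≠ j → Disjoint (P i) (P j))
    (hcover : Finset.univ.biUnion P = Rules) :
    ∃ w : α → ℕ, ∀ S ⊆ Rules, ∀ S' ⊆ Rules,
      (prioCard P S S' ↔ (∑ r ∈ S, w r) ≤ (∑ r ∈ S', w r)) := by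
  classical
  set c := Rules.card with hc
  refine ⟨fun r => ∑ i : Fin n, if r ∈ P i then (c + 1) ^ (n - 1 - (i : ℕ)) else 0, ?_⟩
  have hsum : ∀ S : Finset α, (∑ r ∈ S, ∑ i : Fin n,
      if r ∈ P i then (c + 1) ^ (n - 1 - (i : ℕ)) else 0)
      = ∑ i : Fin n, (S ∩ P i).card * (c + 1) ^ (n - 1 - (i : ℕ)) := by
    intro S
    rw [Finset.sum_comm]
    refine Finset.sum_congr rfl (fun i _ => ?_)
    rw [Finset.sum_ite_mem, Finset.sum_const, smul_eq_mul]
  intro S hS S' hS'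
  have hbound : ∀ (T : Finset α), T ⊆ Rules → ∀ i, ((T ∩ P i).card : ℕ) ≤ c := by
    intro T hT i
    exact Finset.card_le_card (Finset.Subset.trans Finset.inter_subset_left hT)
  rw [hsum, hsum]
  constructor
  · rintro (heq | ⟨i, hlt, hprev⟩)
    · exact le_of_eq (Finset.sum_congr rfl (fun i _ => by rw [heq i]))
    · exact le_of_lt (lex_value_lt' c n _ _ (hbound S hS) i hlt hprev)
  · intro hle
    by_cases hD : ∀ i, (S ∩ P i).card = (S' ∩ P i).card
    · exact Or.inl hD
    · push_neg at hD
      have hne : (Finset.univ.filter (fun i => (S ∩ P i).card ≠ (S' ∩ P i).card)).Nonempty := by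
        obtain ⟨i, hi⟩ := hD
        exact ⟨i, Finset.mem_filter.mpr ⟨Finset.mem_univ i, hi⟩⟩
      set D := Finset.univ.filter (fun i => (S ∩ P i).card ≠ (S' ∩ P i).card) with hDdef
      set i := D.min' hne with hidef
      have hiD : i ∈ D := Finset.min'_mem D hne
      have hdiff : (S ∩ P i).card ≠ (S' ∩ P i).card := (Finset.mem_filter.mp hiD).2
      have hprev : ∀ j, j < i → (S ∩ P j).card = (S' ∩ P j).card := by
        intro j hji
        by_contra hcon
        have : j ∈ D := Finset.mem_filter.mpr ⟨Finset.mem_univ j, hcon⟩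
        exact absurd (Finset.min'_le D j this) (not_le.mpr hji)
      rcases lt_or_gt_of_ne hdiff with h | h
      · exact Or.inr ⟨i, h, hprev⟩
      · exfalso
        have := lex_value_lt' c n _ _ (hbound S' hS') i h (fun j hj => (hprev j hj).symm)
        omega
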